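/- Let μ be a probability distribution over Z_m and let U_m denote the uniform distribution over Z_m. If the statistical distance Δ(μ, U_m) ≥ ε, then there exists j with 1 ≤ j ≤ m−1 such that |E_{x∼μ}[(ω^j)^x]| ≥ 2ε/√m, where ω = exp(2πi/m) is a primitive m-th root of unity. -/

import Mathlib

open Finset

/-- Lemma 2.10: if a distribution `μ` on `ZMod m` is `ε`-far from uniform in statistical
distance, then some nontrivial character has bias at least `2ε/√m`. -/
theorem char_bias_of_stat_distance (m : ℕ) [NeZero m] (hm : 2 ≤ m)
    (μ : ZMod m → ℝ) (hpos : ∀ x, 0 ≤ μ x) (hsum : ∑ x, μ x = 1)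
    (ε : ℝ) (hdist : ε ≤ (1 / 2) * ∑ x : ZMod m, |μ x - 1 / (m : ℝ)|) :
    ∃ j : ℕ, 1 ≤ j ∧ j ≤ m - 1 ∧
      2 * ε / Real.sqrt (m : ℝ) ≤
        ‖(∑ x : ZMod m,
          (μ x : ℂ) * (Complex.exp (2 * Real.pi * Complex.I / (m : ℂ)) ^ j) ^ x.val)‖ := by
  set ω : ℂ := Complex.exp (2 * Real.pi * Complex.I / (m : ℂ)) with hωdef
  have hmne : m ≠ 0 := NeZero.ne m
  have hmR : (0 : ℝ) < m := by positivity
  rcases le_or_gt ε 0 with hε | hε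
  · refine ⟨1, le_refl 1, by omega, ?_⟩
    have h1 : 2 * ε / Real.sqrt m ≤ 0 :=
      div_nonpos_of_nonpos_of_nonneg (by linarith) (Real.sqrt_nonneg _)
    exact h1.trans (norm_nonneg _)
  -- setup
  have hω : IsPrimitiveRoot ω m := Complex.isPrimitiveRoot_exp m hmne
  have hω0 : ω ≠ 0 := Complex.exp_ne_zero _
  have hconj : (starRingEnd ℂ) ω = ω⁻¹ := by
    rw [hωdef, ← Complex.exp_conj, ← Complex.exp_neg]
    congr 1
    simp only [map_div₀, map_mul, Complex.conj_I, Complex.conj_ofReal, map_ofNat,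
      map_natCast]
    ring
  have hconjz : ∀ a : ℤ, (starRingEnd ℂ) (ω ^ a) = ω ^ (-a) := by
    intro a
    rw [map_zpow₀, hconj, inv_zpow, ← zpow_neg]
  -- orthogonality
  have horth : ∀ k : ℤ, ∑ j ∈ range m, ω ^ (k * (j : ℤ)) = if (m : ℤ) ∣ k then (m : ℂ) else 0 := by
    intro k
    have hrw : ∀ j : ℕ, ω ^ (k * (j : ℤ)) = (ω ^ k) ^ j := by
      intro j; rw [zpow_mul, zpow_natCast]
    by_cases h : (m : ℤ) ∣ k
    · rw [if_pos h]
      have h1 : ω ^ k = 1 := (hω.zpow_eq_one_iff_dvd k).mpr h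
      simp [hrw, h1]
    · rw [if_neg h]
      have h1 : ω ^ k ≠ 1 := fun hh => h ((hω.zpow_eq_one_iff_dvd k).mp hh)
      have hpow : (ω ^ k) ^ m = 1 := by
        rw [← zpow_natCast (ω ^ k), ← zpow_mul, mul_comm, zpow_mul, zpow_natCast, hω.pow_eq_one,
          one_zpow]
      calc ∑ j ∈ range m, ω ^ (k * (j : ℤ)) = ∑ j ∈ range m, (ω ^ k) ^ j := by
            exact Finset.sum_congr rfl fun j _ => hrw j
        _ = ((ω ^ k) ^ m - 1) / (ω ^ k - 1) := geom_sum_eq h1 m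
        _ = 0 := by rw [hpow, sub_self, zero_div]
  -- ν
  set ν : ZMod m → ℝ := fun x => μ x - 1 / m with hνdef
  have hcard : (Finset.univ : Finset (ZMod m)).card = m := by
    simp [Finset.card_univ, ZMod.card]
  have hν0 : ∑ x, ν x = 0 := by
    have : ∑ x : ZMod m, (1 / (m : ℝ)) = 1 := by
      rw [Finset.sum_const, hcard, nsmul_eq_mul]
      field_simp
    simp [hνdef, Finset.sum_sub_distrib, hsum, this]
  -- Fourier coefficients
  set S : ℕ → ℂ := fun j => ∑ x : ZMod m, (ν x : ℂ) * ω ^ ((x.val : ℤ) * j) with hSdef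
  have hdvd : ∀ x y : ZMod m, ((m : ℤ) ∣ ((x.val : ℤ) - (y.val : ℤ))) ↔ x = y := by
    intro x y
    rw [← ZMod.intCast_zmod_eq_zero_iff_dvd]
    push_cast
    rw [sub_eq_zero]
    simp [ZMod.natCast_val, ZMod.cast_id]
  -- Parseval
  have key : ∑ j ∈ range m, (Complex.normSq (S j) : ℂ) = (m : ℂ) * ∑ x, ((ν x : ℂ)) ^ 2 := by
    have expand : ∀ j : ℕ, (Complex.normSq (S j) : ℂ) =
        ∑ x : ZMod m, ∑ y : ZMod m,
          ((ν x : ℂ) * (ν y : ℂ)) * ω ^ (((x.val : ℤ) - (y.val : ℤ)) * j) := by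
      intro j
      rw [← Complex.mul_conj (S j), hSdef]
      rw [map_sum, Finset.sum_mul_sum]
      refine Finset.sum_congr rfl fun x _ => Finset.sum_congr rfl fun y _ => ?_
      rw [map_mul, Complex.conj_ofReal, hconjz]
      rw [mul_mul_mul_comm, ← zpow_add₀ hω0]
      congr 1
      ring
    rw [Finset.sum_congr rfl fun j _ => expand j]
    rw [Finset.sum_comm]
    have inner : ∀ x : ZMod m,
        ∑ j ∈ range m, ∑ y : ZMod m,
          ((ν x : ℂ) * (ν y : ℂ)) * ω ^ (((x.val : ℤ) - (y.val : ℤ)) * j)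
        = (ν x : ℂ) ^ 2 * m := by
      intro x
      rw [Finset.sum_comm]
      have : ∀ y : ZMod m,
          ∑ j ∈ range m, ((ν x : ℂ) * (ν y : ℂ)) * ω ^ (((x.val : ℤ) - (y.val : ℤ)) * j)
          = if x = y then ((ν x : ℂ) * (ν y : ℂ)) * m else 0 := by
        intro y
        rw [← Finset.mul_sum, horth]
        by_cases hxy : x = y
        · rw [if_pos ((hdvd x y).mpr hxy), if_pos hxy]
        · rw [if_neg (fun h => hxy ((hdvd x y).mp h)), if_neg hxy, mul_zero]
      rw [Finset.sum_congr rfl fun y _ => this y]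
      rw [Finset.sum_ite_eq (Finset.univ : Finset (ZMod m)) x
        (fun y => ((ν x : ℂ) * (ν y : ℂ)) * (m : ℂ))]
      simp [sq]
    rw [Finset.sum_congr rfl fun x _ => inner x, Finset.mul_sum]
    refine Finset.sum_congr rfl fun x _ => by ring
  have hpars : ∑ j ∈ range m, Complex.normSq (S j) = m * ∑ x, (ν x) ^ 2 := by
    exact_mod_cast key
  -- S 0 = 0
  have hS0 : S 0 = 0 := by
    have : S 0 = ((∑ x, ν x : ℝ) : ℂ) := by
      rw [hSdef]
      push_cast
      refine Finset.sum_congr rfl fun x _ => ?_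
      simp
    rw [this, hν0, Complex.ofReal_zero]
  -- sum over nontrivial characters
  have hsplit : ∑ j ∈ Ico 1 m, Complex.normSq (S j) = m * ∑ x, (ν x) ^ 2 := by
    have h1 : ∑ j ∈ range m, Complex.normSq (S j)
        = Complex.normSq (S 0) + ∑ j ∈ Ico 1 m, Complex.normSq (S j) := by
      rw [Finset.range_eq_Ico]
      exact Finset.sum_eq_sum_Ico_succ_bot (by omega) _
    rw [hS0] at h1
    simp at h1
    rw [← h1, hpars]
  -- Cauchy-Schwarz chain
  have h2ε : 2 * ε ≤ ∑ x, |ν x| := by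
    have : ∑ x : ZMod m, |μ x - 1 / (m : ℝ)| = ∑ x, |ν x| := rfl
    linarith [hdist]
  have hCS : (∑ x, |ν x|) ^ 2 ≤ (m : ℝ) * ∑ x, (ν x) ^ 2 := by
    have := sq_sum_le_card_mul_sum_sq (s := (Finset.univ : Finset (ZMod m))) (f := fun x => |ν x|)
    simp only [hcard, sq_abs] at this
    exact this
  have hchain : 4 * ε ^ 2 ≤ m * ∑ x, (ν x) ^ 2 := by
    have h1 : (2 * ε) ^ 2 ≤ (∑ x, |ν x|) ^ 2 := by
      apply pow_le_pow_left₀ (by linarith) h2ε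
    nlinarith [hCS]
  -- pigeonhole
  have hne : (Ico 1 m).Nonempty := ⟨1, by simp; omega⟩
  have hcard2 : (Ico 1 m).card = m - 1 := by simp
  have hm1 : (0 : ℝ) < (m : ℝ) - 1 := by
    have : (2 : ℝ) ≤ m := by exact_mod_cast hm
    linarith
  obtain ⟨j, hjmem, hj⟩ := Finset.exists_le_of_sum_le hne
    (show ∑ _j ∈ Ico 1 m, (4 * ε ^ 2 / ((m : ℝ) - 1)) ≤ ∑ j ∈ Ico 1 m, Complex.normSq (S j) by
      rw [Finset.sum_const, hcard2, hsplit, nsmul_eq_mul]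
      have hc : ((m - 1 : ℕ) : ℝ) = (m : ℝ) - 1 := by
        push_cast [Nat.cast_sub (by omega : 1 ≤ m)]; ring
      rw [hc, mul_div_cancel₀ _ (ne_of_gt hm1)]
      exact hchain)
  simp only [mem_Ico] at hjmem
  refine ⟨j, hjmem.1, by omega, ?_⟩
  -- identify the target sum with S j
  have hzsum : ∀ f : ℕ → ℂ, ∑ x : ZMod m, f x.val = ∑ i ∈ range m, f i := by
    intro f
    refine Finset.sum_nbij' (fun x => x.val) (fun i => (i : ZMod m)) ?_ ?_ ?_ ?_ ?_
    · intro a _; simpa using ZMod.val_lt a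
    · intro a _; simp
    · intro a _; simp [ZMod.natCast_val, ZMod.cast_id]
    · intro a ha; simp only [mem_range] at ha; exact ZMod.val_cast_of_lt ha
    · intro a _; rfl
  have hjdvd : ¬ ((m : ℤ) ∣ (j : ℤ)) := by
    rw [Int.natCast_dvd_natCast]
    intro h
    have := Nat.le_of_dvd (by omega) h
    omega
  have homega : ∑ x : ZMod m, ω ^ ((j : ℤ) * (x.val : ℤ)) = 0 := by
    have := horth (j : ℤ)
    rw [if_neg hjdvd] at this
    rw [hzsum (fun i => ω ^ ((j : ℤ) * (i : ℤ)))]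
    exact this
  have hTS : S j = (∑ x : ZMod m, (μ x : ℂ) * (ω ^ j) ^ x.val) := by
    have hterm : ∀ x : ZMod m, (ν x : ℂ) * ω ^ ((x.val : ℤ) * j)
        = (μ x : ℂ) * (ω ^ j) ^ x.val - (1 / (m : ℂ)) * ω ^ ((j : ℤ) * (x.val : ℤ)) := by
      intro x
      have hpow : ω ^ ((x.val : ℤ) * j) = (ω ^ j) ^ x.val := by
        rw [mul_comm, zpow_mul, zpow_natCast, zpow_natCast]
      have hpow2 : ω ^ ((j : ℤ) * (x.val : ℤ)) = (ω ^ j) ^ x.val := by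
        rw [zpow_mul, zpow_natCast, zpow_natCast]
      rw [hpow, hpow2, hνdef]
      push_cast
      ring
    calc S j = ∑ x : ZMod m, ((μ x : ℂ) * (ω ^ j) ^ x.val
          - (1 / (m : ℂ)) * ω ^ ((j : ℤ) * (x.val : ℤ))) :=
        Finset.sum_congr rfl fun x _ => hterm x
      _ = ∑ x : ZMod m, (μ x : ℂ) * (ω ^ j) ^ x.val := by
        rw [Finset.sum_sub_distrib, ← Finset.mul_sum, homega, mul_zero, sub_zero]
  rw [← hTS]
  -- final numeric step
  have habs : ‖S j‖ = Real.sqrt (Complex.normSq (S j)) := Complex.norm_def _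
  rw [habs]
  have hle : 4 * ε ^ 2 / (m : ℝ) ≤ Complex.normSq (S j) := by
    have : 4 * ε ^ 2 / (m : ℝ) ≤ 4 * ε ^ 2 / ((m : ℝ) - 1) := by
      apply div_le_div_of_nonneg_left (by positivity) hm1 (by linarith)
    linarith
  calc 2 * ε / Real.sqrt m = Real.sqrt (4 * ε ^ 2 / m) := by
        rw [show (4 * ε ^ 2 : ℝ) = (2 * ε) ^ 2 by ring,
          Real.sqrt_div (by positivity) _, Real.sqrt_sq (by linarith)]
    _ ≤ Real.sqrt (Complex.normSq (S j)) := Real.sqrt_le_sqrt hle
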